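/- Let c ≥ 0 and let Y : [0,T) → ℝⁿ be a C² function with Y(0) = 0 and Y(t) ≠ 0 for t ∈ (0,T), satisfying ⟨Y''(t), Y(t)⟩ ≥ c·|Y(t)|². Then for all t ∈ (0,T), the logarithmic derivative satisfies (d/dt) log |Y(t)|² ≥ 2·s_{−c}'(t)/s_{−c}(t). -/

import Mathlib

open Real MeasureTheory Set

/-- The comparison function `s_κ`: solution of `f'' + κ f = 0`, `f 0 = 0`, `f' 0 = 1`. -/
noncomputable def sk (κ t : ℝ) : ℝ :=
  if 0 < κ then Real.sin (Real.sqrt κ * t) / Real.sqrt κ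
  else if κ = 0 then t
  else Real.sinh (Real.sqrt (-κ) * t) / Real.sqrt (-κ)

lemma sk_neg_eq (c : ℝ) (hc : 0 < c) :
    sk (-c) = fun t => Real.sinh (Real.sqrt c * t) / Real.sqrt c := by
  funext t
  simp [sk, not_lt.2 (neg_nonpos.2 hc.le), ne_of_lt (neg_neg_iff_pos.2 hc)]

lemma sk_neg_zero_eq : sk (0 : ℝ) = fun t => t := by
  funext t; simp [sk]

lemma sk_neg_hasDerivAt (c : ℝ) (hc : 0 ≤ c) (t : ℝ) :
    HasDerivAt (sk (-c)) (Real.cosh (Real.sqrt c * t)) t := by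
  rcases hc.eq_or_lt with h0 | hpos
  · rw [← h0, neg_zero, sk_neg_zero_eq]
    exact (hasDerivAt_id t).congr_deriv (by simp [← h0])
  · rw [sk_neg_eq c hpos]
    have hs : Real.sqrt c ≠ 0 := (Real.sqrt_pos.2 hpos).ne'
    have h1 : HasDerivAt (fun t : ℝ => Real.sqrt c * t) (Real.sqrt c) t := by
      simpa using (hasDerivAt_id t).const_mul (Real.sqrt c)
    have h2 := ((Real.hasDerivAt_sinh (Real.sqrt c * t)).comp t h1).div_const (Real.sqrt c)
    refine h2.congr_deriv (Eq.symm ?_)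
    field_simp

lemma sk_cosh_hasDerivAt (c : ℝ) (hc : 0 ≤ c) (t : ℝ) :
    HasDerivAt (fun t => Real.cosh (Real.sqrt c * t)) (c * sk (-c) t) t := by
  have h1 : HasDerivAt (fun t : ℝ => Real.sqrt c * t) (Real.sqrt c) t := by
    simpa using (hasDerivAt_id t).const_mul (Real.sqrt c)
  have h2 := (Real.hasDerivAt_cosh (Real.sqrt c * t)).comp t h1
  refine h2.congr_deriv (Eq.symm ?_)
  rcases hc.eq_or_lt with h0 | hpos
  · rw [← h0]; simp
  · rw [sk_neg_eq c hpos]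
    have hs : Real.sqrt c ≠ 0 := (Real.sqrt_pos.2 hpos).ne'
    field_simp
    linear_combination (-Real.sinh (Real.sqrt c * t)) * Real.mul_self_sqrt hc

lemma sk_neg_pos (c : ℝ) (hc : 0 ≤ c) {t : ℝ} (ht : 0 < t) : 0 < sk (-c) t := by
  rcases hc.eq_or_lt with h0 | hpos
  · rw [← h0, neg_zero, sk_neg_zero_eq]; exact ht
  · rw [sk_neg_eq c hpos]
    have hs : 0 < Real.sqrt c := Real.sqrt_pos.2 hpos
    exact div_pos (Real.sinh_pos_iff.2 (by positivity)) hs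

lemma sk_neg_at_zero (c : ℝ) (hc : 0 ≤ c) : sk (-c) 0 = 0 := by
  rcases hc.eq_or_lt with h0 | hpos
  · rw [← h0, neg_zero, sk_neg_zero_eq]
  · rw [sk_neg_eq c hpos]; simp

/-- Logarithmic derivative bound for Jacobi fields in Günther's theorem. -/
theorem stmt_13 (n : ℕ) (c T : ℝ) (hc : 0 ≤ c) (hT : 0 < T)
    (Y : ℝ → EuclideanSpace ℝ (Fin n))
    (hY_C2 : ContDiffOn ℝ 2 Y (Set.Ico 0 T))
    (hY0 : Y 0 = 0) (hYne : ∀ t ∈ Set.Ioo 0 T, Y t ≠ 0)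
    (hineq : ∀ t ∈ Set.Ioo 0 T,
      c * ‖Y t‖ ^ 2 ≤ inner ℝ (deriv (deriv Y) t) (Y t)) :
    ∀ t ∈ Set.Ioo 0 T,
      2 * deriv (sk (-c)) t / sk (-c) t ≤
        deriv (fun s => Real.log (‖Y s‖ ^ 2)) t := by
  have hUo : IsOpen (Set.Ioo (0:ℝ) T) := isOpen_Ioo
  have hC2 : ContDiffOn ℝ 2 Y (Set.Ioo 0 T) := hY_C2.mono Set.Ioo_subset_Ico_self
  have hYdiff : ∀ τ ∈ Set.Ioo 0 T, HasDerivAt Y (deriv Y τ) τ := fun τ hτ =>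
    ((hC2.differentiableOn (by norm_num)).differentiableAt (hUo.mem_nhds hτ)).hasDerivAt
  have hC1 : ContDiffOn ℝ 1 (deriv Y) (Set.Ioo 0 T) :=
    hC2.deriv_of_isOpen hUo (by norm_num)
  have hY'diff : ∀ τ ∈ Set.Ioo 0 T, HasDerivAt (deriv Y) (deriv (deriv Y) τ) τ := fun τ hτ =>
    ((hC1.differentiableOn one_ne_zero).differentiableAt (hUo.mem_nhds hτ)).hasDerivAt
  have hnne : ∀ τ ∈ Set.Ioo 0 T, ‖Y τ‖ ≠ 0 := fun τ hτ => norm_ne_zero_iff.2 (hYne τ hτ)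
  -- the comparison function K
  set K : ℝ → ℝ := fun τ =>
    (inner ℝ (deriv Y τ) (Y τ) : ℝ) / ‖Y τ‖ * sk (-c) τ
      - ‖Y τ‖ * Real.cosh (Real.sqrt c * τ) with hKdef
  -- derivative of the norm
  have hnorm : ∀ τ ∈ Set.Ioo 0 T,
      HasDerivAt (fun τ => ‖Y τ‖) ((inner ℝ (deriv Y τ) (Y τ) : ℝ) / ‖Y τ‖) τ := by
    intro τ hτ
    have hinner : HasDerivAt (fun τ => (inner ℝ (Y τ) (Y τ) : ℝ))
        ((inner ℝ (Y τ) (deriv Y τ) : ℝ) + (inner ℝ (deriv Y τ) (Y τ) : ℝ)) τ :=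
      (hYdiff τ hτ).inner ℝ (hYdiff τ hτ)
    have hune : (inner ℝ (Y τ) (Y τ) : ℝ) ≠ 0 := by
      rw [real_inner_self_eq_norm_mul_norm]
      exact mul_ne_zero (hnne τ hτ) (hnne τ hτ)
    have h := (Real.hasDerivAt_sqrt hune).comp τ hinner
    simp only [Function.comp_def] at h
    have heq : (fun τ => Real.sqrt (inner ℝ (Y τ) (Y τ) : ℝ)) = fun τ => ‖Y τ‖ := by
      funext x
      rw [real_inner_self_eq_norm_mul_norm, Real.sqrt_mul_self (norm_nonneg _)]
    rw [heq] at h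
    refine h.congr_deriv (Eq.symm ?_)
    rw [real_inner_self_eq_norm_mul_norm, Real.sqrt_mul_self (norm_nonneg _),
      real_inner_comm (Y τ) (deriv Y τ)]
    field_simp
    ring
  -- derivative of K
  have hK : ∀ τ ∈ Set.Ioo 0 T, HasDerivAt K
      ((((inner ℝ (deriv Y τ) (deriv Y τ) : ℝ) + (inner ℝ (deriv (deriv Y) τ) (Y τ) : ℝ))
        - (inner ℝ (deriv Y τ) (Y τ) : ℝ) ^ 2 / ‖Y τ‖ ^ 2 - c * ‖Y τ‖ ^ 2)
        * sk (-c) τ / ‖Y τ‖) τ := by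
    intro τ hτ
    have hp : HasDerivAt (fun τ => (inner ℝ (deriv Y τ) (Y τ) : ℝ))
        ((inner ℝ (deriv Y τ) (deriv Y τ) : ℝ) + (inner ℝ (deriv (deriv Y) τ) (Y τ) : ℝ)) τ :=
      (hY'diff τ hτ).inner ℝ (hYdiff τ hτ)
    have hq := (hp.div (hnorm τ hτ) (hnne τ hτ)).mul (sk_neg_hasDerivAt c hc τ)
    have hr := (hnorm τ hτ).mul (sk_cosh_hasDerivAt c hc τ)
    have h := hq.sub hr
    refine h.congr_deriv (Eq.symm ?_)
    have h1 : ‖Y τ‖ ≠ 0 := hnne τ hτ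
    have h2 : ‖Y τ‖ * ‖Y τ‖ = ‖Y τ‖ ^ 2 := by ring
    simp only [Pi.div_apply]
    field_simp
    ring
  -- K is nondecreasing-type inequality on (0, T)
  intro t ht
  have hKmono : ∀ t₀ ∈ Set.Ioo 0 t, K t₀ ≤ K t := by
    intro t₀ ht₀
    have hsub : Set.Icc t₀ t ⊆ Set.Ioo 0 T := fun x hx =>
      ⟨lt_of_lt_of_le ht₀.1 hx.1, lt_of_le_of_lt hx.2 ht.2⟩
    have hmono : MonotoneOn K (Set.Icc t₀ t) := by
      apply monotoneOn_of_deriv_nonneg (convex_Icc t₀ t)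
      · intro x hx
        exact ((hK x (hsub hx)).differentiableAt).continuousAt.continuousWithinAt
      · intro x hx
        rw [interior_Icc] at hx
        exact ((hK x (hsub (Set.Ioo_subset_Icc_self hx))).differentiableAt).differentiableWithinAt
      · intro x hx
        rw [interior_Icc] at hx
        have hxU := hsub (Set.Ioo_subset_Icc_self hx)
        rw [(hK x hxU).deriv]
        have hCS : (inner ℝ (deriv Y x) (Y x) : ℝ) ^ 2
            ≤ (inner ℝ (deriv Y x) (deriv Y x) : ℝ) * ‖Y x‖ ^ 2 := by
          have := real_inner_mul_inner_self_le (deriv Y x) (Y x)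
          rw [real_inner_self_eq_norm_mul_norm (Y x)] at this
          nlinarith [this]
        have hI := hineq x hxU
        have hs0 : 0 < sk (-c) x := sk_neg_pos c hc hxU.1
        have hn0 : 0 < ‖Y x‖ := lt_of_le_of_ne (norm_nonneg _) (Ne.symm (hnne x hxU))
        have hbr : 0 ≤ (inner ℝ (deriv Y x) (deriv Y x) : ℝ)
            + (inner ℝ (deriv (deriv Y) x) (Y x) : ℝ)
            - (inner ℝ (deriv Y x) (Y x) : ℝ) ^ 2 / ‖Y x‖ ^ 2 - c * ‖Y x‖ ^ 2 := by
          have hd : (inner ℝ (deriv Y x) (Y x) : ℝ) ^ 2 / ‖Y x‖ ^ 2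
              ≤ (inner ℝ (deriv Y x) (deriv Y x) : ℝ) :=
            (div_le_iff₀ (by positivity)).2 hCS
          linarith
        positivity
    exact hmono (Set.left_mem_Icc.2 ht₀.2.le) (Set.right_mem_Icc.2 ht₀.2.le) ht₀.2.le
  -- limit of K at 0⁺ along Ioo 0 T
  have hKlim : Filter.Tendsto K (nhdsWithin 0 (Set.Ioo 0 T)) (nhds 0) := by
    have hYc : ContinuousWithinAt Y (Set.Ioo 0 T) 0 :=
      (hY_C2.continuousOn.continuousWithinAt (by constructor <;> simp [hT.le, hT])).mono
        Set.Ioo_subset_Ico_self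
    have hB : Filter.Tendsto (fun τ => ‖Y τ‖ * Real.cosh (Real.sqrt c * τ))
        (nhdsWithin 0 (Set.Ioo 0 T)) (nhds 0) := by
      have h1 : Filter.Tendsto (fun τ => ‖Y τ‖) (nhdsWithin 0 (Set.Ioo 0 T)) (nhds 0) := by
        have := hYc.norm
        simpa [hY0] using this.tendsto
      have h2 : Filter.Tendsto (fun τ => Real.cosh (Real.sqrt c * τ))
          (nhdsWithin 0 (Set.Ioo 0 T)) (nhds 1) := by
        have : Filter.Tendsto (fun τ : ℝ => Real.cosh (Real.sqrt c * τ)) (nhds 0)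
            (nhds (Real.cosh (Real.sqrt c * 0))) :=
          (Real.continuous_cosh.comp (continuous_const.mul continuous_id)).continuousAt
        simpa using this.mono_left nhdsWithin_le_nhds
      simpa using h1.mul h2
    have hA : Filter.Tendsto (fun τ => (inner ℝ (deriv Y τ) (Y τ) : ℝ) / ‖Y τ‖ * sk (-c) τ)
        (nhdsWithin 0 (Set.Ioo 0 T)) (nhds 0) := by
      have hUD : UniqueDiffOn ℝ (Set.Ico (0:ℝ) T) := uniqueDiffOn_Ico 0 T
      have hdw : ContinuousOn (derivWithin Y (Set.Ico 0 T)) (Set.Ico 0 T) :=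
        hY_C2.continuousOn_derivWithin hUD (by norm_num)
      have hdweq : ∀ τ ∈ Set.Ioo 0 T, derivWithin Y (Set.Ico 0 T) τ = deriv Y τ := by
        intro τ hτ
        apply derivWithin_of_mem_nhds
        exact Filter.mem_of_superset (hUo.mem_nhds hτ) Set.Ioo_subset_Ico_self
      have hg : Filter.Tendsto (fun τ => ‖derivWithin Y (Set.Ico 0 T) τ‖ * |sk (-c) τ|)
          (nhdsWithin 0 (Set.Ioo 0 T)) (nhds 0) := by
        have h1 : Filter.Tendsto (fun τ => ‖derivWithin Y (Set.Ico 0 T) τ‖)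
            (nhdsWithin 0 (Set.Ioo 0 T)) (nhds ‖derivWithin Y (Set.Ico 0 T) 0‖) := by
          have := (hdw.continuousWithinAt
            (show (0:ℝ) ∈ Set.Ico 0 T by constructor <;> simp [hT.le, hT])).norm
          exact this.tendsto.mono_left (nhdsWithin_mono _ Set.Ioo_subset_Ico_self)
        have h2 : Filter.Tendsto (fun τ => |sk (-c) τ|)
            (nhdsWithin 0 (Set.Ioo 0 T)) (nhds 0) := by
          have hcont : ContinuousAt (sk (-c)) 0 :=
            (sk_neg_hasDerivAt c hc 0).differentiableAt.continuousAt
          have := (hcont.tendsto).abs.mono_left (nhdsWithin_le_nhds (s := Set.Ioo 0 T))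
          simpa [sk_neg_at_zero c hc] using this
        simpa using h1.mul h2
      apply squeeze_zero_norm' _ hg
      filter_upwards [self_mem_nhdsWithin] with τ hτ
      rw [hdweq τ hτ]
      rw [Real.norm_eq_abs, abs_mul, abs_div, abs_norm]
      apply mul_le_mul_of_nonneg_right _ (abs_nonneg _)
      calc |(inner ℝ (deriv Y τ) (Y τ) : ℝ)| / ‖Y τ‖ ≤ ‖deriv Y τ‖ * ‖Y τ‖ / ‖Y τ‖ := by
            gcongr
            · exact abs_real_inner_le_norm _ _
        _ = ‖deriv Y τ‖ := by field_simp [hnne τ hτ]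
    have := hA.sub hB
    simpa using this
  -- conclude K t ≥ 0
  have hKt : 0 ≤ K t := by
    have hne : (nhdsWithin (0:ℝ) (Set.Ioo 0 T)).NeBot := by
      apply mem_closure_iff_nhdsWithin_neBot.1
      rw [closure_Ioo hT.ne]
      exact ⟨le_refl 0, hT.le⟩
    apply le_of_tendsto hKlim
    have hmem : Set.Ioo 0 t ∈ nhdsWithin (0:ℝ) (Set.Ioo 0 T) := by
      rw [mem_nhdsWithin]
      exact ⟨Set.Iio t, isOpen_Iio, ht.1, fun x hx => ⟨hx.2.1, hx.1⟩⟩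
    filter_upwards [hmem] with τ hτ
    exact hKmono τ hτ
  -- rewrite both derivatives and finish
  have hs0 : 0 < sk (-c) t := sk_neg_pos c hc ht.1
  have hn0 : 0 < ‖Y t‖ := lt_of_le_of_ne (norm_nonneg _) (Ne.symm (hnne t ht))
  have hderiv_sk : deriv (sk (-c)) t = Real.cosh (Real.sqrt c * t) :=
    (sk_neg_hasDerivAt c hc t).deriv
  have hlog : deriv (fun s => Real.log (‖Y s‖ ^ 2)) t
      = 2 * (inner ℝ (deriv Y t) (Y t) : ℝ) / ‖Y t‖ ^ 2 := by
    have hinner : HasDerivAt (fun τ => (inner ℝ (Y τ) (Y τ) : ℝ))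
        ((inner ℝ (Y t) (deriv Y t) : ℝ) + (inner ℝ (deriv Y t) (Y t) : ℝ)) t :=
      (hYdiff t ht).inner ℝ (hYdiff t ht)
    have heq : (fun s => Real.log (‖Y s‖ ^ 2)) = fun s => Real.log (inner ℝ (Y s) (Y s) : ℝ) := by
      funext x
      rw [real_inner_self_eq_norm_sq]
    have hune : (inner ℝ (Y t) (Y t) : ℝ) ≠ 0 := by
      rw [real_inner_self_eq_norm_sq]; positivity
    have h := (Real.hasDerivAt_log hune).comp t hinner
    simp only [Function.comp_def] at h
    rw [heq, h.deriv]
    rw [real_inner_self_eq_norm_sq, real_inner_comm (Y t) (deriv Y t)]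
    field_simp
    ring
  rw [hderiv_sk, hlog]
  -- from 0 ≤ K t : P * s ≥ ‖Y‖² * cosh
  have hKt' : ‖Y t‖ ^ 2 * Real.cosh (Real.sqrt c * t)
      ≤ (inner ℝ (deriv Y t) (Y t) : ℝ) * sk (-c) t := by
    have : ‖Y t‖ * Real.cosh (Real.sqrt c * t)
        ≤ (inner ℝ (deriv Y t) (Y t) : ℝ) / ‖Y t‖ * sk (-c) t := by
      have := hKt
      rw [hKdef] at this
      linarith [this]
    calc ‖Y t‖ ^ 2 * Real.cosh (Real.sqrt c * t)
        = ‖Y t‖ * (‖Y t‖ * Real.cosh (Real.sqrt c * t)) := by ring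
      _ ≤ ‖Y t‖ * ((inner ℝ (deriv Y t) (Y t) : ℝ) / ‖Y t‖ * sk (-c) t) := by
          exact mul_le_mul_of_nonneg_left this (norm_nonneg _)
      _ = (inner ℝ (deriv Y t) (Y t) : ℝ) * sk (-c) t := by field_simp
  rw [div_le_div_iff₀ hs0 (by positivity)]
  nlinarith [hKt']
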